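/- Let H be a real Hilbert space and D ⊆ H a symmetric dictionary. Let ε ≥ 0, h ∈ (0,1), and let f, u ∈ H with u ≠ 0, ‖f − u‖ ≤ ε, ‖u‖_{A₁(D)} finite, and (1−h)‖f‖ ≥ ε. Then sup_{g∈D} ⟨f, g⟩ ≥ h‖f‖² / ‖u‖_{A₁(D)}. -/
import Mathlib


open scoped RealInnerProductSpace

/-- `A₁(D)`: the closure of the convex hull of the (symmetric) dictionary `D`. -/
noncomputable def A1 {H : Type*} [NormedAddCommGroup H] [InnerProductSpace ℝ H]
    (D : Set H) : Set H :=
  closure (convexHull ℝ D)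

/-- The `A₁(D)`-norm of `u`: `inf {M > 0 : u/M ∈ A₁(D)}`. -/
noncomputable def A1norm {H : Type*} [NormedAddCommGroup H] [InnerProductSpace ℝ H]
    (D : Set H) (u : H) : ℝ :=
  sInf {M : ℝ | 0 < M ∧ M⁻¹ • u ∈ A1 D}

theorem stmt_11 {H : Type*} [NormedAddCommGroup H] [InnerProductSpace ℝ H] [CompleteSpace H]
    (D : Set H)
    (hDnorm : ∀ g ∈ D, ‖g‖ = 1) (hDsymm : ∀ g ∈ D, -g ∈ D)
    (hDspan : (Submodule.span ℝ D).topologicalClosure = ⊤)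
    (ε : ℝ) (hε : 0 ≤ ε) (h : ℝ) (hh : h ∈ Set.Ioo (0:ℝ) 1)
    (f u : H) (hu : u ≠ 0) (hnoise : ‖f - u‖ ≤ ε)
    (hfin : ∃ M : ℝ, 0 < M ∧ M⁻¹ • u ∈ A1 D)
    (hbig : ε ≤ (1 - h) * ‖f‖) :
    sSup {r : ℝ | ∃ g ∈ D, r = ⟪f, g⟫} ≥ h * ‖f‖ ^ 2 / A1norm D u := by
  obtain ⟨M₀, hM₀pos, hM₀mem⟩ := hfin
  set T : Set ℝ := {r : ℝ | ∃ g ∈ D, r = ⟪f, g⟫} with hT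
  set s : ℝ := sSup T with hs
  -- D is nonempty
  have hDne : D.Nonempty := by
    by_contra hcon
    rw [Set.not_nonempty_iff_eq_empty] at hcon
    simp [A1, hcon] at hM₀mem
  -- T is nonempty and bounded above
  have hTne : T.Nonempty := by
    obtain ⟨g, hg⟩ := hDne
    exact ⟨⟪f, g⟫, g, hg, rfl⟩
  have hTbdd : BddAbove T := by
    refine ⟨‖f‖, fun r hr => ?_⟩
    obtain ⟨g, hg, rfl⟩ := hr
    calc ⟪f, g⟫ ≤ ‖f‖ * ‖g‖ := real_inner_le_norm f g
    _ = ‖f‖ := by rw [hDnorm g hg, mul_one]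
  -- inner with any element of A1 D is ≤ s
  have hkey : ∀ x ∈ A1 D, ⟪f, x⟫ ≤ s := by
    intro x hx
    have hconv : Convex ℝ {y : H | ⟪f, y⟫ ≤ s} :=
      convex_halfSpace_le (innerSL ℝ f).toLinearMap.isLinear s
    have hclosed : IsClosed {y : H | ⟪f, y⟫ ≤ s} :=
      isClosed_le (innerSL ℝ f).continuous continuous_const
    have hsub : D ⊆ {y : H | ⟪f, y⟫ ≤ s} := fun g hg =>
      le_csSup hTbdd ⟨g, hg, rfl⟩
    exact closure_minimal (convexHull_min hsub hconv) hclosed hx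
  -- elements of A1 D have norm ≤ 1
  have hnorm1 : ∀ x ∈ A1 D, ‖x‖ ≤ 1 := by
    intro x hx
    have hconv : Convex ℝ (Metric.closedBall (0:H) 1) := convex_closedBall 0 1
    have hsub : D ⊆ Metric.closedBall (0:H) 1 := fun g hg => by
      simp [Metric.mem_closedBall, dist_zero_right, hDnorm g hg]
    have := closure_minimal (convexHull_min hsub hconv) Metric.isClosed_closedBall hx
    simpa [Metric.mem_closedBall, dist_zero_right] using this
  set S : Set ℝ := {M : ℝ | 0 < M ∧ M⁻¹ • u ∈ A1 D} with hS
  have hSne : S.Nonempty := ⟨M₀, hM₀pos, hM₀mem⟩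
  -- every M ∈ S satisfies ‖u‖ ≤ M
  have hSlb : ∀ M ∈ S, ‖u‖ ≤ M := by
    intro M hM
    obtain ⟨hMpos, hMmem⟩ := hM
    have h1 := hnorm1 _ hMmem
    rw [norm_smul, Real.norm_eq_abs, abs_inv, abs_of_pos hMpos] at h1
    rw [inv_mul_le_iff₀ hMpos, mul_one] at h1
    exact h1
  have hN : A1norm D u = sInf S := rfl
  have hNpos : 0 < A1norm D u := by
    rw [hN]
    exact lt_of_lt_of_le (norm_pos_iff.mpr hu) (le_csInf hSne hSlb)
  -- s ≥ 0 by symmetry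
  have hs0 : 0 ≤ s := by
    obtain ⟨g, hg⟩ := hDne
    have h1 : ⟪f, g⟫ ≤ s := le_csSup hTbdd ⟨g, hg, rfl⟩
    have h2 : -⟪f, g⟫ ≤ s := by
      have : ⟪f, -g⟫ ≤ s := le_csSup hTbdd ⟨-g, hDsymm g hg, rfl⟩
      rwa [inner_neg_right] at this
    linarith
  -- ⟪f, u⟫ ≥ h ‖f‖²
  have hfu : h * ‖f‖ ^ 2 ≤ ⟪f, u⟫ := by
    have h1 : ⟪f, f - u⟫ ≤ ‖f‖ * ‖f - u‖ := real_inner_le_norm f (f - u)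
    have h2 : ‖f‖ * ‖f - u‖ ≤ ‖f‖ * ((1 - h) * ‖f‖) :=
      mul_le_mul_of_nonneg_left (le_trans hnoise hbig) (norm_nonneg f)
    have h3 : ⟪f, f - u⟫ = ‖f‖ ^ 2 - ⟪f, u⟫ := by
      rw [inner_sub_right, real_inner_self_eq_norm_sq]
    nlinarith [sq_nonneg (‖f‖)]
  -- for M ∈ S, ⟪f, u⟫ ≤ M * s
  have hMs : ∀ M ∈ S, ⟪f, u⟫ ≤ M * s := by
    intro M hM
    obtain ⟨hMpos, hMmem⟩ := hM
    have h1 : ⟪f, M⁻¹ • u⟫ ≤ s := hkey _ hMmem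
    rw [real_inner_smul_right] at h1
    calc ⟪f, u⟫ = M * (M⁻¹ * ⟪f, u⟫) := by field_simp
    _ ≤ M * s := mul_le_mul_of_nonneg_left h1 (le_of_lt hMpos)
  rcases eq_or_lt_of_le (norm_nonneg f) with hf0 | hfpos
  · have hf : ‖f‖ = 0 := hf0.symm
    rw [ge_iff_le]
    have heq : h * ‖f‖ ^ 2 / A1norm D u = 0 := by rw [hf]; ring
    rw [heq]
    exact hs0
  · have hfu' : 0 < ⟪f, u⟫ := lt_of_lt_of_le (mul_pos hh.1 (pow_pos hfpos 2)) hfu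
    have hspos : 0 < s := by
      have := hMs M₀ ⟨hM₀pos, hM₀mem⟩
      nlinarith
    have hNge : ⟪f, u⟫ / s ≤ A1norm D u := by
      rw [hN]
      refine le_csInf hSne fun M hM => ?_
      rw [div_le_iff₀ hspos]
      exact hMs M hM
    rw [ge_iff_le, div_le_iff₀ hNpos]
    calc h * ‖f‖ ^ 2 ≤ ⟪f, u⟫ := hfu
    _ = (⟪f, u⟫ / s) * s := by field_simp
    _ ≤ A1norm D u * s := mul_le_mul_of_nonneg_right hNge (le_of_lt hspos)
    _ = s * A1norm D u := mul_comm _ _
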